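/- In the two-dimensional Gaussian model, the marginal posterior of θ = ‖μ‖ under the uniform prior suffers probability dilution: for fixed d ≥ 0 and fixed θ > 0, G(θ; d) = Γ₂(θ²/σ²; d²/σ²) → 0 as σ → ∞. In particular the posterior probability of collision G([0,R]; d) → 0 as σ → ∞, for any fixed d and R. -/

import Mathlib

open Set Filter Topology

/-- CDF of the noncentral chi-square distribution with 2 degrees of freedom and
noncentrality `ν`, evaluated at `x`. -/
noncomputable def Gamma2 (x ν : ℝ) : ℝ :=
  ∑' k : ℕ, Real.exp (-ν / 2) * (ν / 2) ^ k / (Nat.factorial k : ℝ) *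
    (1 - Real.exp (-x / 2) *
      ∑ j ∈ Finset.range (k + 1), (x / 2) ^ j / (Nat.factorial j : ℝ))

lemma Gamma2_term_nonneg (x ν : ℝ) (hx : 0 ≤ x) (hν : 0 ≤ ν) (k : ℕ) :
    0 ≤ Real.exp (-ν / 2) * (ν / 2) ^ k / (Nat.factorial k : ℝ) *
      (1 - Real.exp (-x / 2) *
        ∑ j ∈ Finset.range (k + 1), (x / 2) ^ j / (Nat.factorial j : ℝ)) := by
  apply mul_nonneg
  · positivity
  · have hS : ∑ j ∈ Finset.range (k + 1), (x / 2) ^ j / (Nat.factorial j : ℝ)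
        ≤ Real.exp (x / 2) := Real.sum_le_exp_of_nonneg (by positivity) _
    have : Real.exp (-x / 2) *
        ∑ j ∈ Finset.range (k + 1), (x / 2) ^ j / (Nat.factorial j : ℝ)
        ≤ Real.exp (-x / 2) * Real.exp (x / 2) :=
      mul_le_mul_of_nonneg_left hS (Real.exp_nonneg _)
    have h0 : -x / 2 + x / 2 = 0 := by ring
    rw [← Real.exp_add, h0, Real.exp_zero] at this
    linarith

lemma Gamma2_term_le (x ν : ℝ) (hx : 0 ≤ x) (hν : 0 ≤ ν) (k : ℕ) :
    Real.exp (-ν / 2) * (ν / 2) ^ k / (Nat.factorial k : ℝ) *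
      (1 - Real.exp (-x / 2) *
        ∑ j ∈ Finset.range (k + 1), (x / 2) ^ j / (Nat.factorial j : ℝ))
    ≤ Real.exp (-ν / 2) * (ν / 2) ^ k / (Nat.factorial k : ℝ) *
      (1 - Real.exp (-x / 2)) := by
  apply mul_le_mul_of_nonneg_left _ (by positivity)
  have hS : (1 : ℝ) ≤ ∑ j ∈ Finset.range (k + 1), (x / 2) ^ j / (Nat.factorial j : ℝ) := by
    have := Finset.single_le_sum (f := fun j => (x / 2) ^ j / (Nat.factorial j : ℝ))
      (fun j _ => by positivity) (Finset.mem_range.2 (Nat.succ_pos k))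
    simpa using this
  nlinarith [Real.exp_pos (-x / 2),
    mul_le_mul_of_nonneg_left hS (Real.exp_pos (-x/2)).le]

lemma summable_poisson (ν c : ℝ) :
    Summable (fun k : ℕ => Real.exp (-ν / 2) * (ν / 2) ^ k / (Nat.factorial k : ℝ) * c) := by
  have h : Summable (fun k : ℕ => (ν / 2) ^ k / (Nat.factorial k : ℝ)) :=
    Real.summable_pow_div_factorial (ν / 2)
  have := (h.mul_left (Real.exp (-ν / 2))).mul_right c
  convert this using 2 with k
  · rfl
  ring

lemma tsum_poisson (ν c : ℝ) :
    ∑' k : ℕ, Real.exp (-ν / 2) * (ν / 2) ^ k / (Nat.factorial k : ℝ) * c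
      = Real.exp (-ν / 2) * Real.exp (ν / 2) * c := by
  have h : ∑' k : ℕ, (ν / 2) ^ k / (Nat.factorial k : ℝ) = Real.exp (ν / 2) := by
    rw [Real.exp_eq_exp_ℝ, NormedSpace.exp_eq_tsum_div]
  calc ∑' k : ℕ, Real.exp (-ν / 2) * (ν / 2) ^ k / (Nat.factorial k : ℝ) * c
      = ∑' k : ℕ, (Real.exp (-ν / 2) * c) * ((ν / 2) ^ k / (Nat.factorial k : ℝ)) := by
        congr 1; funext k; ring
    _ = (Real.exp (-ν / 2) * c) * Real.exp (ν / 2) := by rw [tsum_mul_left, h]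
    _ = Real.exp (-ν / 2) * Real.exp (ν / 2) * c := by ring

lemma Gamma2_bounds (x ν : ℝ) (hx : 0 ≤ x) (hν : 0 ≤ ν) :
    0 ≤ Gamma2 x ν ∧ Gamma2 x ν ≤ 1 - Real.exp (-x / 2) := by
  have hg : Summable (fun k : ℕ => Real.exp (-ν / 2) * (ν / 2) ^ k /
      (Nat.factorial k : ℝ) * (1 - Real.exp (-x / 2))) := summable_poisson ν _
  have hsumf : Summable (fun k : ℕ => Real.exp (-ν / 2) * (ν / 2) ^ k / (Nat.factorial k : ℝ) *
      (1 - Real.exp (-x / 2) *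
        ∑ j ∈ Finset.range (k + 1), (x / 2) ^ j / (Nat.factorial j : ℝ))) :=
    Summable.of_nonneg_of_le (Gamma2_term_nonneg x ν hx hν) (Gamma2_term_le x ν hx hν) hg
  constructor
  · exact tsum_nonneg (Gamma2_term_nonneg x ν hx hν)
  · have := Summable.tsum_le_tsum (Gamma2_term_le x ν hx hν) hsumf hg
    have h0 : -ν / 2 + ν / 2 = 0 := by ring
    rw [tsum_poisson, ← Real.exp_add, h0, Real.exp_zero, one_mul] at this
    exact this

/-- Probability dilution of the uniform-prior marginal posterior: for fixed
`d ≥ 0` and fixed `θ > 0`, `G(θ; d) = Γ₂(θ²/σ²; d²/σ²) → 0` as `σ → ∞`.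
In particular the posterior probability of collision `G([0,R]; d) → 0` as
`σ → ∞`, for any fixed `d` and `R > 0`. -/
theorem uniform_prior_probability_dilution (d : ℝ) (hd : 0 ≤ d) (θ : ℝ) (hθ : 0 < θ) :
    Tendsto (fun σ : ℝ => Gamma2 (θ ^ 2 / σ ^ 2) (d ^ 2 / σ ^ 2))
      atTop (𝓝 0) := by
  have hx : ∀ σ : ℝ, 0 ≤ θ ^ 2 / σ ^ 2 := fun σ => by positivity
  have hν : ∀ σ : ℝ, 0 ≤ d ^ 2 / σ ^ 2 := fun σ => by positivity
  have hxlim : Tendsto (fun σ : ℝ => θ ^ 2 / σ ^ 2) atTop (𝓝 0) :=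
    Tendsto.div_atTop tendsto_const_nhds (tendsto_pow_atTop two_ne_zero)
  have hglim : Tendsto (fun σ : ℝ => 1 - Real.exp (-(θ ^ 2 / σ ^ 2) / 2)) atTop (𝓝 0) := by
    have : Tendsto (fun σ : ℝ => -(θ ^ 2 / σ ^ 2) / 2) atTop (𝓝 0) := by
      simpa using ((hxlim.neg).div_const 2)
    have := (Real.continuous_exp.tendsto 0).comp this
    rw [Real.exp_zero] at this
    simpa using (tendsto_const_nhds (x := (1:ℝ)) (f := atTop)).sub this
  refine squeeze_zero (fun σ => (Gamma2_bounds _ _ (hx σ) (hν σ)).1)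
    (fun σ => (Gamma2_bounds _ _ (hx σ) (hν σ)).2) hglim
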